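/- Let G be a finite symmetry group for the substitution tiling system (𝒫, ω) which acts freely on 𝒫. Then the only subsets E ⊆ Ω_punc that are open in the tiling metric topology and invariant for R_punc ⋊ G (i.e. T ∈ E, (T, T') ∈ R_punc and g ∈ G imply g⁻¹T' ∈ E) are ∅ and Ω_punc; equivalently, for every T ∈ Ω_punc the orbit {g⁻¹(T + x) : g ∈ G, x ∈ ℝ^d, T + x ∈ Ω_punc} is dense in Ω_punc. -/

import Mathlib

open Metric Set Pointwise

noncomputable section

/-- Points of `ℝ^d`. -/
abbrev Pt (d : ℕ) := EuclideanSpace ℝ (Fin d)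

/-- A (possibly labelled) tile in `ℝ^d`: a subset of `ℝ^d` together with a label. -/
structure Tile (d : ℕ) where
  carrier : Set (Pt d)
  label : ℕ

instance {d : ℕ} : Inhabited (Tile d) := ⟨⟨∅, 0⟩⟩

/-- Translate of a tile by a vector. -/
def Tile.translate {d : ℕ} (t : Tile d) (x : Pt d) : Tile d :=
  ⟨(fun y => y + x) '' t.carrier, t.label⟩

/-- A tile proper: homeomorphic to the closed unit ball. -/
def Tile.IsTile {d : ℕ} (t : Tile d) : Prop :=
  Nonempty (t.carrier ≃ₜ (Metric.closedBall (0 : Pt d) 1))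

/-- Support of a partial tiling: the union of its tiles. -/
def psupp {d : ℕ} (P : Set (Tile d)) : Set (Pt d) := ⋃ t ∈ P, t.carrier

/-- `tilesAt P U` = the tiles of `P` meeting `U`, written `P(U)` in the paper. -/
def tilesAt {d : ℕ} (P : Set (Tile d)) (U : Set (Pt d)) : Set (Tile d) :=
  {t ∈ P | (t.carrier ∩ U).Nonempty}

/-- Translate of a collection of tiles. -/
def translateSet {d : ℕ} (P : Set (Tile d)) (x : Pt d) : Set (Tile d) :=
  (fun t => t.translate x) '' P

/-- A partial tiling: tiles with pairwise disjoint interiors. -/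
def IsPartialTiling {d : ℕ} (P : Set (Tile d)) : Prop :=
  (∀ t ∈ P, t.IsTile) ∧
  ∀ t ∈ P, ∀ t' ∈ P, t ≠ t' → interior t.carrier ∩ interior t'.carrier = ∅

/-- A patch: a finite partial tiling. -/
def IsPatch {d : ℕ} (P : Set (Tile d)) : Prop := IsPartialTiling P ∧ P.Finite

/-- A tiling of all of `ℝ^d`. -/
def IsTilingOfSpace {d : ℕ} (P : Set (Tile d)) : Prop :=
  IsPartialTiling P ∧ psupp P = univ

/-- A substitution tiling system `(𝒫, ω)` with inflation constant `λ > 1`. -/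
structure SubstSystem (d : ℕ) where
  proto : Set (Tile d)
  proto_finite : proto.Finite
  proto_nonempty : proto.Nonempty
  proto_isTile : ∀ p ∈ proto, p.IsTile
  proto_zero_mem : ∀ p ∈ proto, (0 : Pt d) ∈ interior p.carrier
  proto_no_translate : ∀ p ∈ proto, ∀ q ∈ proto, ∀ x : Pt d,
    q = p.translate x → p = q ∧ x = 0
  lam : ℝ
  one_lt_lam : 1 < lam
  sub : Tile d → Set (Tile d)
  sub_patch : ∀ p ∈ proto, IsPatch (sub p)
  sub_proto : ∀ p ∈ proto, ∀ t ∈ sub p, ∃ q ∈ proto, ∃ x : Pt d, t = q.translate x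
  sub_supp : ∀ p ∈ proto, psupp (sub p) = lam • p.carrier
  sub_translate : ∀ (t : Tile d) (x : Pt d),
    sub (t.translate x) = (fun s => s.translate (lam • x)) '' sub t

namespace SubstSystem

variable {d : ℕ} (S : SubstSystem d)

/-- Tile-wise application of the substitution to a collection of tiles. -/
def subSet (P : Set (Tile d)) : Set (Tile d) := ⋃ t ∈ P, S.sub t

/-- Iterated substitution `ω^n` on collections of tiles. -/
def subIter (n : ℕ) (P : Set (Tile d)) : Set (Tile d) := (S.subSet)^[n] P

/-- `ω^n(t)` for a single tile `t`. -/
def omegan (n : ℕ) (t : Tile d) : Set (Tile d) := S.subIter n {t}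

/-- The continuous hull `Ω`. -/
def Omega : Set (Set (Tile d)) :=
  {T | IsTilingOfSpace T ∧ ∀ P : Set (Tile d), P ⊆ T → IsPatch P →
    ∃ n : ℕ, ∃ p ∈ S.proto, ∃ x : Pt d, P ⊆ translateSet (S.omegan n p) x}

/-- `x` is the puncture of the tile `t`, i.e. `t = p + x` for a prototile `p`. -/
def IsPuncture (t : Tile d) (x : Pt d) : Prop :=
  ∃ p ∈ S.proto, t = p.translate x

open Classical in
/-- The puncture `x(t)` of a tile `t` (chosen; unique for translates of prototiles). -/
def punc (t : Tile d) : Pt d :=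
  if h : ∃ x : Pt d, S.IsPuncture t x then h.choose else 0

/-- The punctured hull (transversal) `Ω_punc`. -/
def OmegaPunc : Set (Set (Tile d)) :=
  {T ∈ S.Omega | ∃ t ∈ T, S.IsPuncture t 0}

end SubstSystem

/-- The tiling metric. -/
def tilingDist {d : ℕ} (T T' : Set (Tile d)) : ℝ :=
  sInf ({1} ∪ {ε : ℝ | 0 < ε ∧ ∃ x x' : Pt d, ‖x‖ < ε ∧ ‖x'‖ < ε ∧
    tilesAt (translateSet T (-x)) (ball (0 : Pt d) (1 / ε)) =
      tilesAt (translateSet T' (-x')) (ball (0 : Pt d) (1 / ε))})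

namespace SubstSystem

variable {d : ℕ} (S : SubstSystem d)

/-- Density of a family of tilings in `Ω_punc` w.r.t. the tiling metric. -/
def DenseInPunc (E : Set (Set (Tile d))) : Prop :=
  ∀ T ∈ S.OmegaPunc, ∀ ε : ℝ, 0 < ε → ∃ T' ∈ E, tilingDist T T' < ε

/-- Openness of a subset of `Ω_punc` w.r.t. the tiling metric (subspace topology). -/
def OpenInPunc (E : Set (Set (Tile d))) : Prop :=
  E ⊆ S.OmegaPunc ∧ ∀ T ∈ E, ∃ ε : ℝ, 0 < ε ∧
    ∀ T' ∈ S.OmegaPunc, tilingDist T T' < ε → T' ∈ E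

/-- The translational equivalence relation `R_punc` on `Ω_punc`. -/
def Rpunc : Set (Set (Tile d) × Set (Tile d)) :=
  {TT | TT.1 ∈ S.OmegaPunc ∧ TT.2 ∈ S.OmegaPunc ∧ ∃ x : Pt d, TT.2 = translateSet TT.1 x}

/-- `Punc(n, p)`: the punctures of the tiles of `ω^n(p)`. -/
def Punc (n : ℕ) (p : Tile d) : Set (Pt d) :=
  {x | ∃ t ∈ S.omegan n p, S.IsPuncture t x}

/-- `E^n_p(x, y)`. -/
def Eset (n : ℕ) (p : Tile d) (x y : Pt d) : Set (Set (Tile d) × Set (Tile d)) :=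
  {TT | ∃ T ∈ S.OmegaPunc, p ∈ T ∧
    TT.1 = translateSet (S.subIter n T) (-x) ∧ TT.2 = translateSet (S.subIter n T) (-y)}

/-- `R_n`. -/
def Rn (n : ℕ) : Set (Set (Tile d) × Set (Tile d)) :=
  ⋃ p ∈ S.proto, ⋃ x ∈ S.Punc n p, ⋃ y ∈ S.Punc n p, S.Eset n p x y

/-- `R_AF = ∪ₙ R_n`. -/
def RAF : Set (Set (Tile d) × Set (Tile d)) := ⋃ n : ℕ, S.Rn n

/-- `U(P, t)`. -/
def Uset (P : Set (Tile d)) (t : Tile d) : Set (Set (Tile d)) :=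
  {T ∈ S.OmegaPunc | translateSet P (-(S.punc t)) ⊆ T}

/-- `V(P, t₁, t₂)`. -/
def Vset (P : Set (Tile d)) (t₁ t₂ : Tile d) : Set (Set (Tile d) × Set (Tile d)) :=
  {TT | TT.1 ∈ S.Uset P t₁ ∧ TT.2 = translateSet TT.1 (S.punc t₁ - S.punc t₂)}

/-- (A1) primitivity. -/
def Primitive : Prop :=
  ∃ N : ℕ, ∀ p ∈ S.proto, ∀ q ∈ S.proto, ∃ x : Pt d, Tile.translate q x ∈ S.omegan N p

/-- (A2) finite local complexity. -/
def FLC : Prop :=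
  ∀ R : ℝ, 0 < R → ∃ Ps : Set (Set (Tile d)), Ps.Finite ∧
    ∀ P : Set (Tile d), IsPatch P → Metric.diam (psupp P) < R →
      (∃ T ∈ S.Omega, P ⊆ T) → ∃ P₀ ∈ Ps, ∃ x : Pt d, P = translateSet P₀ x

/-- (A3) `ω : Ω → Ω` is bijective. -/
def SubBijective : Prop := Set.BijOn S.subSet S.Omega S.Omega

/-- (A4) `ω` forces its border. -/
def ForcesBorder : Prop :=
  ∃ n : ℕ, ∀ p ∈ S.proto, ∀ T ∈ S.Omega, ∀ T' ∈ S.Omega, ∀ x x' : Pt d,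
    translateSet (S.omegan n p) x ⊆ T → translateSet (S.omegan n p) x' ⊆ T' →
    translateSet (tilesAt T ((fun y => y + x) '' psupp (S.omegan n p))) (-x) =
      translateSet (tilesAt T' ((fun y => y + x') '' psupp (S.omegan n p))) (-x')

/-- Prototile boundaries have box-counting dimension strictly less than `d`. -/
def SmallBoundary : Prop :=
  ∃ c : ℝ, c < d ∧ ∃ K₀ : ℝ, ∀ p ∈ S.proto, ∀ ε : ℝ, 0 < ε →
    ∃ centers : Finset (Pt d), (centers.card : ℝ) ≤ K₀ * ε ^ (-c) ∧
      frontier p.carrier ⊆ ⋃ z ∈ centers, ball z ε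

end SubstSystem

/-- A symmetry group action for `(𝒫, ω)`: `G ≤ O(d, ℝ)` acting on tiles, preserving
the prototile set and commuting with the substitution. -/
structure SymmAction {d : ℕ} (S : SubstSystem d) (G : Subgroup (Pt d ≃ₗᵢ[ℝ] Pt d)) where
  act : G → Tile d → Tile d
  act_carrier : ∀ (g : G) (t : Tile d),
    (act g t).carrier = (g : Pt d ≃ₗᵢ[ℝ] Pt d) '' t.carrier
  act_one : ∀ t : Tile d, act 1 t = t
  act_mul : ∀ (g h : G) (t : Tile d), act (g * h) t = act g (act h t)
  act_proto : ∀ (g : G), ∀ p ∈ S.proto, act g p ∈ S.proto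
  act_translate : ∀ (g : G) (t : Tile d) (x : Pt d),
    act g (t.translate x) = (act g t).translate ((g : Pt d ≃ₗᵢ[ℝ] Pt d) x)
  act_sub : ∀ (g : G), ∀ p ∈ S.proto, S.sub (act g p) = act g '' S.sub p

/-- Action of a group element on a (partial) tiling: `gT = {gt : t ∈ T}`. -/
def SymmAction.actSet {d : ℕ} {S : SubstSystem d} {G : Subgroup (Pt d ≃ₗᵢ[ℝ] Pt d)}
    (σ : SymmAction S G) (g : G) (T : Set (Tile d)) : Set (Tile d) := σ.act g '' T

/-- `G` acts freely on the prototile set. -/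
def SymmAction.FreeOnProto {d : ℕ} {S : SubstSystem d} {G : Subgroup (Pt d ≃ₗᵢ[ℝ] Pt d)}
    (σ : SymmAction S G) : Prop := ∀ g : G, ∀ p ∈ S.proto, σ.act g p = p → g = 1

/-- Composition of relations. -/
def relComp {α : Type*} (R₁ R₂ : Set (α × α)) : Set (α × α) :=
  {q | ∃ z : α, (q.1, z) ∈ R₁ ∧ (z, q.2) ∈ R₂}

/-- Transpose (inverse) of a relation. -/
def relTrans {α : Type*} (R : Set (α × α)) : Set (α × α) := {q | (q.2, q.1) ∈ R}


section Lemmas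

variable {d : ℕ}

theorem Tile.ext' {t s : Tile d} (hc : t.carrier = s.carrier) (hl : t.label = s.label) :
    t = s := by cases t; cases s; simp_all

@[simp] theorem Tile.translate_carrier (t : Tile d) (x : Pt d) :
    (t.translate x).carrier = (fun y => y + x) '' t.carrier := rfl

@[simp] theorem Tile.translate_label (t : Tile d) (x : Pt d) :
    (t.translate x).label = t.label := rfl

@[simp] theorem Tile.translate_zero (t : Tile d) : t.translate 0 = t := by
  refine Tile.ext' ?_ rfl
  ext z; simp [Tile.translate]

theorem Tile.translate_translate (t : Tile d) (a b : Pt d) :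
    (t.translate a).translate b = t.translate (a + b) := by
  refine Tile.ext' ?_ rfl
  simp only [Tile.translate_carrier, ← Set.image_comp]
  apply Set.image_congr'
  intro y; simp [add_assoc]

theorem Tile.translate_left_cancel {t s : Tile d} {a : Pt d}
    (h : t.translate a = s.translate a) : t = s := by
  have := congrArg (fun u => u.translate (-a)) h
  simpa [Tile.translate_translate] using this

@[simp] theorem mem_translateSet {P : Set (Tile d)} {x : Pt d} {t : Tile d} :
    t ∈ translateSet P x ↔ ∃ s ∈ P, s.translate x = t := by
  simp [translateSet]

@[simp] theorem translateSet_zero (P : Set (Tile d)) : translateSet P 0 = P := by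
  ext t; simp

theorem translateSet_translateSet (P : Set (Tile d)) (a b : Pt d) :
    translateSet (translateSet P a) b = translateSet P (a + b) := by
  ext t
  simp only [mem_translateSet]
  constructor
  · rintro ⟨s, ⟨u, hu, rfl⟩, rfl⟩
    exact ⟨u, hu, (Tile.translate_translate u a b).symm⟩
  · rintro ⟨u, hu, rfl⟩
    exact ⟨u.translate a, ⟨u, hu, rfl⟩, Tile.translate_translate u a b⟩

theorem translateSet_mono {P Q : Set (Tile d)} (h : P ⊆ Q) (x : Pt d) :
    translateSet P x ⊆ translateSet Q x := Set.image_mono h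

theorem translateSet_singleton (t : Tile d) (x : Pt d) :
    translateSet {t} x = {t.translate x} := by simp [translateSet]

theorem subset_of_translateSet_subset {P Q : Set (Tile d)} {x : Pt d}
    (h : translateSet P x ⊆ Q) : P ⊆ translateSet Q (-x) := by
  intro t ht
  refine ⟨t.translate x, h ⟨t, ht, rfl⟩, ?_⟩
  simp [Tile.translate_translate]

theorem translateSet_subset_of_subset {P Q : Set (Tile d)} {x : Pt d}
    (h : P ⊆ translateSet Q (-x)) : translateSet P x ⊆ Q := by
  intro t ht
  rcases ht with ⟨s, hs, rfl⟩
  rcases h hs with ⟨u, hu, rfl⟩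
  simpa [Tile.translate_translate] using hu

theorem psupp_translateSet (P : Set (Tile d)) (x : Pt d) :
    psupp (translateSet P x) = (fun y => y + x) '' psupp P := by
  unfold psupp translateSet
  rw [Set.biUnion_image]
  simp only [Tile.translate_carrier]
  rw [← Set.image_iUnion₂]

end Lemmas

section Lemmas2

variable {d : ℕ}

theorem Tile.IsTile.isCompact {t : Tile d} (h : t.IsTile) : IsCompact t.carrier := by
  rcases h with ⟨e⟩
  have : CompactSpace (Metric.closedBall (0 : Pt d) 1) :=
    isCompact_iff_compactSpace.mp (isCompact_closedBall _ _)
  have : CompactSpace t.carrier := e.symm.compactSpace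
  exact isCompact_iff_compactSpace.mpr this

theorem Tile.IsTile.isClosed {t : Tile d} (h : t.IsTile) : IsClosed t.carrier :=
  h.isCompact.isClosed

theorem Tile.IsTile.translate {t : Tile d} (h : t.IsTile) (x : Pt d) :
    (t.translate x).IsTile := by
  rcases h with ⟨e⟩
  refine ⟨Homeomorph.trans ?_ e⟩
  have e2 := (Homeomorph.addRight x).image t.carrier
  exact (Homeomorph.setCongr (by rfl : ((fun y => y + x) '' t.carrier : Set (Pt d)) =
    (Homeomorph.addRight x) '' t.carrier)).trans e2.symm

theorem interior_translate (s : Set (Pt d)) (x : Pt d) :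
    interior ((fun y => y + x) '' s) = (fun y => y + x) '' interior s := by
  have := (Homeomorph.addRight x).image_interior s
  exact this.symm

theorem image_add_ball (z x : Pt d) (r : ℝ) :
    (fun y => y + x) '' ball z r = ball (z + x) r := by
  ext w
  simp only [Set.mem_image, mem_ball]
  constructor
  · rintro ⟨y, hy, rfl⟩
    simpa [dist_eq_norm, add_sub_add_right_eq_sub] using hy
  · intro hw
    refine ⟨w - x, ?_, by abel⟩
    rw [dist_eq_norm] at hw ⊢
    have h3 : w - x - z = w - (z + x) := by abel
    rw [h3]; exact hw

theorem interior_frontier_empty {s : Set (Pt d)} (hs : IsClosed s) :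
    interior (frontier s) = ∅ := by
  by_contra h
  rcases Set.nonempty_iff_ne_empty.mpr h with ⟨z, hz⟩
  have h1 : z ∈ interior s := by
    have : interior (frontier s) ⊆ interior s :=
      interior_mono (by rw [hs.frontier_eq]; exact Set.diff_subset)
    exact this hz
  have h2 : z ∈ frontier s := interior_subset hz
  rw [hs.frontier_eq] at h2
  exact h2.2 h1

/-- A nonempty open set cannot be covered by finitely many closed sets with empty interior. -/
theorem open_not_subset_finite_union_nowhere_dense :
    ∀ (F : Set (Set (Pt d))), F.Finite →
      (∀ C ∈ F, IsClosed C ∧ interior C = ∅) →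
      ∀ U : Set (Pt d), IsOpen U → U ⊆ ⋃₀ F → U = ∅ := by
  intro F hF
  refine Set.Finite.induction_on F hF ?_ ?_
  · intro _ U _ hU; simpa using hU
  · intro C F hCF hFfin ih hprop U hUopen hUsub
    have hC := hprop C (Set.mem_insert _ _)
    have hU' : U ∩ Cᶜ = ∅ := by
      refine ih (fun D hD => hprop D (Set.mem_insert_of_mem _ hD))
        (U ∩ Cᶜ) (hUopen.inter hC.1.isOpen_compl) ?_
      intro z hz
      rcases hUsub hz.1 with ⟨D, hD, hzD⟩
      rcases Set.mem_insert_iff.mp hD with rfl | hD'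
      · exact absurd hzD hz.2
      · exact ⟨D, hD', hzD⟩
    have hUC : U ⊆ C := by
      intro z hz
      by_contra hzc
      exact absurd (Set.mem_inter hz hzc) (by rw [hU']; exact fun h => h)
    have : U ⊆ interior C := hUopen.subset_interior_iff.mpr hUC
    rw [hC.2] at this
    exact Set.subset_empty_iff.mp this

end Lemmas2

namespace SubstSystem

variable {d : ℕ} (S : SubstSystem d)

theorem subSet_mono {P Q : Set (Tile d)} (h : P ⊆ Q) : S.subSet P ⊆ S.subSet Q := by
  intro t ht
  rcases Set.mem_iUnion₂.mp ht with ⟨s, hs, hts⟩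
  exact Set.mem_iUnion₂.mpr ⟨s, h hs, hts⟩

theorem subIter_zero (P : Set (Tile d)) : S.subIter 0 P = P := rfl

theorem subIter_succ' (n : ℕ) (P : Set (Tile d)) :
    S.subIter (n + 1) P = S.subSet (S.subIter n P) :=
  Function.iterate_succ_apply' _ _ _

theorem subIter_add (m n : ℕ) (P : Set (Tile d)) :
    S.subIter (m + n) P = S.subIter m (S.subIter n P) := by
  unfold subIter
  rw [Function.iterate_add_apply]

theorem subIter_mono {P Q : Set (Tile d)} (h : P ⊆ Q) (n : ℕ) :
    S.subIter n P ⊆ S.subIter n Q := by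
  induction n with
  | zero => simpa [subIter_zero] using h
  | succ n ih => rw [subIter_succ', subIter_succ']; exact S.subSet_mono ih

theorem subIter_singleton_subset {P : Set (Tile d)} {t : Tile d} (h : t ∈ P) (n : ℕ) :
    S.subIter n {t} ⊆ S.subIter n P :=
  S.subIter_mono (Set.singleton_subset_iff.mpr h) n

theorem subSet_translateSet (P : Set (Tile d)) (x : Pt d) :
    S.subSet (translateSet P x) = translateSet (S.subSet P) (S.lam • x) := by
  ext t
  simp only [subSet, Set.mem_iUnion₂, mem_translateSet]
  constructor
  · rintro ⟨s, ⟨u, hu, rfl⟩, hts⟩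
    rw [S.sub_translate] at hts
    rcases hts with ⟨v, hv, rfl⟩
    exact ⟨v, ⟨u, hu, hv⟩, rfl⟩
  · rintro ⟨v, hv, rfl⟩
    rcases hv with ⟨u, hu, hvu⟩
    refine ⟨u.translate x, ⟨u, hu, rfl⟩, ?_⟩
    rw [S.sub_translate]
    exact ⟨v, hvu, rfl⟩

theorem subIter_translateSet (n : ℕ) (P : Set (Tile d)) (x : Pt d) :
    S.subIter n (translateSet P x) = translateSet (S.subIter n P) (S.lam ^ n • x) := by
  induction n with
  | zero => simp [subIter_zero]
  | succ n ih =>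
    rw [subIter_succ', ih, subSet_translateSet, subIter_succ', smul_smul, ← pow_succ']

/-- Tiles of `ω^n(p)` are translates of prototiles. -/
theorem omegan_proto {p : Tile d} (hp : p ∈ S.proto) (n : ℕ) :
    ∀ t ∈ S.omegan n p, ∃ q ∈ S.proto, ∃ z : Pt d, t = q.translate z := by
  induction n with
  | zero =>
    intro t ht
    have ht' : t = p := ht
    subst ht'
    exact ⟨t, hp, 0, (Tile.translate_zero t).symm⟩
  | succ n ih =>
    intro t ht
    rw [omegan, subIter_succ'] at ht
    rcases Set.mem_iUnion₂.mp ht with ⟨s, hs, hts⟩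
    rcases ih s hs with ⟨q, hq, z, rfl⟩
    rw [S.sub_translate] at hts
    rcases hts with ⟨v, hv, rfl⟩
    rcases S.sub_proto q hq v hv with ⟨q', hq', w, rfl⟩
    exact ⟨q', hq', w + S.lam • z, Tile.translate_translate _ _ _⟩

/-- Every tile of a tiling in `Ω` is a translate of a prototile. -/
theorem mem_Omega_proto {T : Set (Tile d)} (hT : T ∈ S.Omega) :
    ∀ t ∈ T, ∃ q ∈ S.proto, ∃ z : Pt d, t = q.translate z := by
  intro t ht
  have hpatch : IsPatch {t} := by
    constructor
    · constructor
      · intro s hs; have hs' : s = t := hs; rw [hs']; exact hT.1.1.1 t ht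
      · intro s hs s' hs' hne
        have e1 : s = t := hs
        have e2 : s' = t := hs'
        exact absurd (e1.trans e2.symm) hne
    · exact Set.finite_singleton t
  rcases hT.2 {t} (Set.singleton_subset_iff.mpr ht) hpatch with ⟨n, p, hp, x, hsub⟩
  rcases hsub (Set.mem_singleton t) with ⟨s, hs, hst⟩
  subst hst
  rcases S.omegan_proto hp n s hs with ⟨q, hq, z, rfl⟩
  exact ⟨q, hq, z + x, Tile.translate_translate _ _ _⟩

/-- Iterated preimages under `ω` (using A3). -/
theorem exists_subIter_preimage (hA3 : S.SubBijective) {T : Set (Tile d)}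
    (hT : T ∈ S.Omega) (n : ℕ) :
    ∃ T' ∈ S.Omega, S.subIter n T' = T := by
  induction n with
  | zero => exact ⟨T, hT, rfl⟩
  | succ n ih =>
    rcases ih with ⟨T', hT', rfl⟩
    rcases hA3.2.2 hT' with ⟨T'', hT'', hTT⟩
    refine ⟨T'', hT'', ?_⟩
    have h1 : S.subIter 1 T'' = T' := by
      simpa [subIter, Function.iterate_one] using hTT
    rw [S.subIter_add n 1, h1]

/-- Primitivity: every tiling in `Ω` contains a translate of every supertile `ω^n(p)` (A1, A3). -/
theorem supertile_in_tiling (hA1 : S.Primitive) (hA3 : S.SubBijective)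
    {T : Set (Tile d)} (hT : T ∈ S.Omega) {p : Tile d} (hp : p ∈ S.proto) (n : ℕ) :
    ∃ u : Pt d, translateSet (S.omegan n p) u ⊆ T := by
  rcases hA1 with ⟨N, hN⟩
  rcases S.exists_subIter_preimage hA3 hT n with ⟨T₃, hT₃, rfl⟩
  rcases S.exists_subIter_preimage hA3 hT₃ N with ⟨T₂, hT₂, rfl⟩
  -- T₂ is nonempty
  have hne : ∃ t₂, t₂ ∈ T₂ := by
    have : (0 : Pt d) ∈ psupp T₂ := by rw [hT₂.1.2]; trivial
    rcases Set.mem_iUnion₂.mp this with ⟨t₂, ht₂, _⟩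
    exact ⟨t₂, ht₂⟩
  rcases hne with ⟨t₂, ht₂⟩
  rcases S.mem_Omega_proto hT₂ t₂ ht₂ with ⟨q, hq, z, rfl⟩
  rcases hN q hq p hp with ⟨w, hw⟩
  -- ω^N(q + z) = ω^N(q) + λ^N z contains p + (w + λ^N z)
  have h1 : (p.translate w).translate (S.lam ^ N • z) ∈ S.subIter N T₂ := by
    apply S.subIter_singleton_subset ht₂ N
    rw [show ({Tile.translate q z} : Set (Tile d)) = translateSet {q} z from
      (translateSet_singleton q z).symm, subIter_translateSet]
    exact ⟨p.translate w, hw, rfl⟩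
  rw [Tile.translate_translate] at h1
  refine ⟨S.lam ^ n • (w + S.lam ^ N • z), ?_⟩
  have h2 : translateSet (S.omegan n p) (S.lam ^ n • (w + S.lam ^ N • z)) =
      S.subIter n {p.translate (w + S.lam ^ N • z)} := by
    rw [show ({Tile.translate p (w + S.lam ^ N • z)} : Set (Tile d)) =
      translateSet {p} (w + S.lam ^ N • z) from (translateSet_singleton _ _).symm,
      subIter_translateSet]
    rfl
  rw [h2]
  exact S.subIter_singleton_subset h1 n

end SubstSystem

section Lemmas4

variable {d : ℕ}

theorem image_add_closedBall (z x : Pt d) (r : ℝ) :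
    (fun y => y + x) '' closedBall z r = closedBall (z + x) r := by
  ext w
  simp only [Set.mem_image, mem_closedBall]
  constructor
  · rintro ⟨y, hy, rfl⟩
    rw [dist_eq_norm] at hy ⊢
    have h3 : y + x - (z + x) = y - z := by abel
    rw [h3]; exact hy
  · intro hw
    refine ⟨w - x, ?_, by abel⟩
    rw [dist_eq_norm] at hw ⊢
    have h3 : w - x - z = w - (z + x) := by abel
    rw [h3]; exact hw

theorem image_add_univ (x : Pt d) : (fun y => y + x) '' (univ : Set (Pt d)) = univ := by
  ext w
  simp only [Set.mem_image, Set.mem_univ, iff_true]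
  exact ⟨w - x, trivial, by abel⟩

theorem exists_min_prop {α : Type*} {F : Set α} (hF : F.Finite) (Q : α → ℝ → Prop)
    (hmono : ∀ a r r', 0 < r' → r' ≤ r → Q a r → Q a r') :
    (∀ a ∈ F, ∃ r, 0 < r ∧ Q a r) → ∃ r, 0 < r ∧ ∀ a ∈ F, Q a r := by
  refine Set.Finite.induction_on F hF ?_ ?_
  · exact fun _ => ⟨1, one_pos, fun a ha => absurd ha (Set.notMem_empty a)⟩
  · intro a s _ _ ih h
    rcases ih (fun b hb => h b (Set.mem_insert_of_mem _ hb)) with ⟨r, hr, hrall⟩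
    rcases h a (Set.mem_insert _ _) with ⟨ra, hra, hQa⟩
    refine ⟨min r ra, lt_min hr hra, ?_⟩
    intro b hb
    rcases Set.mem_insert_iff.mp hb with rfl | hb'
    · exact hmono b ra _ (lt_min hr hra) (min_le_right _ _) hQa
    · exact hmono b r _ (lt_min hr hra) (min_le_left _ _) (hrall b hb')

theorem exists_max_prop {α : Type*} {F : Set α} (hF : F.Finite) (Q : α → ℝ → Prop)
    (hmono : ∀ a r r', 0 < r' → r ≤ r' → Q a r → Q a r') :
    (∀ a ∈ F, ∃ r, 0 < r ∧ Q a r) → ∃ r, 0 < r ∧ ∀ a ∈ F, Q a r := by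
  refine Set.Finite.induction_on F hF ?_ ?_
  · exact fun _ => ⟨1, one_pos, fun a ha => absurd ha (Set.notMem_empty a)⟩
  · intro a s _ _ ih h
    rcases ih (fun b hb => h b (Set.mem_insert_of_mem _ hb)) with ⟨r, hr, hrall⟩
    rcases h a (Set.mem_insert _ _) with ⟨ra, hra, hQa⟩
    refine ⟨max r ra, lt_of_lt_of_le hr (le_max_left _ _), ?_⟩
    intro b hb
    rcases Set.mem_insert_iff.mp hb with rfl | hb'
    · exact hmono b ra _ (lt_of_lt_of_le hr (le_max_left _ _)) (le_max_right _ _) hQa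
    · exact hmono b r _ (lt_of_lt_of_le hr (le_max_left _ _)) (le_max_left _ _) (hrall b hb')

namespace SubstSystem

variable (S : SubstSystem d)

theorem exists_inner_radius :
    ∃ r, 0 < r ∧ ∀ p ∈ S.proto, ball (0 : Pt d) r ⊆ interior p.carrier := by
  refine exists_min_prop S.proto_finite _ ?_ ?_
  · intro p r r' _ hle h
    exact Set.Subset.trans (Metric.ball_subset_ball hle) h
  · intro p hp
    have h0 : (0 : Pt d) ∈ interior p.carrier := S.proto_zero_mem p hp
    rcases Metric.isOpen_iff.mp isOpen_interior 0 h0 with ⟨r, hr, hball⟩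
    exact ⟨r, hr, hball⟩

theorem exists_outer_radius :
    ∃ C, 0 < C ∧ ∀ p ∈ S.proto, p.carrier ⊆ closedBall (0 : Pt d) C := by
  refine exists_max_prop S.proto_finite _ ?_ ?_
  · intro p r r' _ hle h
    exact Set.Subset.trans h (Metric.closedBall_subset_closedBall hle)
  · intro p hp
    have hb : Bornology.IsBounded p.carrier := (S.proto_isTile p hp).isCompact.isBounded
    rcases hb.subset_closedBall 0 with ⟨C, hC⟩
    exact ⟨max C 1, lt_of_lt_of_le one_pos (le_max_right _ _),
      Set.Subset.trans hC (Metric.closedBall_subset_closedBall (le_max_left _ _))⟩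

theorem translate_carrier_subset {q : Tile d} {C : ℝ}
    (hC : q.carrier ⊆ closedBall (0 : Pt d) C) (z : Pt d) :
    (q.translate z).carrier ⊆ closedBall z C := by
  rw [Tile.translate_carrier]
  have := Set.image_mono (f := fun y => y + z) hC
  rw [image_add_closedBall, zero_add] at this
  exact this

theorem ball_subset_interior_translate {q : Tile d} {r : ℝ}
    (hr : ball (0 : Pt d) r ⊆ interior q.carrier) (z : Pt d) :
    ball z r ⊆ interior (q.translate z).carrier := by
  rw [Tile.translate_carrier, interior_translate]
  have := Set.image_mono (f := fun y => y + z) hr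
  rw [image_add_ball, zero_add] at this
  exact this

theorem disjoint_puncture_balls {T : Set (Tile d)} (hT : IsPartialTiling T)
    {t t' : Tile d} (ht : t ∈ T) (ht' : t' ∈ T) (hne : t ≠ t')
    {q q' : Tile d} {z z' : Pt d} (hq : q ∈ S.proto) (hq' : q' ∈ S.proto)
    (e : t = q.translate z) (e' : t' = q'.translate z')
    {r : ℝ} (hr : 0 < r)
    (hball : ∀ p ∈ S.proto, ball (0 : Pt d) r ⊆ interior p.carrier) :
    2 * r ≤ dist z z' := by
  by_contra hlt
  push_neg at hlt
  have hdisj := hT.2 t ht t' ht' hne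
  set m := midpoint ℝ z z' with hm
  have h1 : m ∈ ball z r := by
    rw [mem_ball, dist_midpoint_left]
    have : ‖(2 : ℝ)‖⁻¹ * dist z z' < ‖(2 : ℝ)‖⁻¹ * (2 * r) := by
      apply mul_lt_mul_of_pos_left hlt
      norm_num
    calc ‖(2 : ℝ)‖⁻¹ * dist z z' < ‖(2 : ℝ)‖⁻¹ * (2 * r) := this
    _ = r := by rw [show ‖(2:ℝ)‖ = 2 from by norm_num]; ring
  have h2 : m ∈ ball z' r := by
    rw [mem_ball, hm, midpoint_comm, dist_midpoint_left]
    have : ‖(2 : ℝ)‖⁻¹ * dist z' z < ‖(2 : ℝ)‖⁻¹ * (2 * r) := by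
      apply mul_lt_mul_of_pos_left _ (by norm_num)
      rw [dist_comm]; exact hlt
    calc ‖(2 : ℝ)‖⁻¹ * dist z' z < ‖(2 : ℝ)‖⁻¹ * (2 * r) := this
    _ = r := by rw [show ‖(2:ℝ)‖ = 2 from by norm_num]; ring
  have hm1 : m ∈ interior t.carrier := by
    rw [e]; exact SubstSystem.ball_subset_interior_translate (hball q hq) z h1
  have hm2 : m ∈ interior t'.carrier := by
    rw [e']; exact SubstSystem.ball_subset_interior_translate (hball q' hq') z' h2
  have : m ∈ interior t.carrier ∩ interior t'.carrier := ⟨hm1, hm2⟩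
  rw [hdisj] at this
  exact this

/-- Finiteness of the set of tiles of a tiling of `Ω` meeting a bounded set. -/
theorem finite_tilesAt {T : Set (Tile d)} (hT : T ∈ S.Omega) (M : ℝ) :
    (tilesAt T (ball (0 : Pt d) M)).Finite := by
  rcases S.exists_inner_radius with ⟨r, hr, hrball⟩
  rcases S.exists_outer_radius with ⟨C, hC, hCball⟩
  set A := tilesAt T (ball (0 : Pt d) M) with hA
  have hrep : ∀ t ∈ A, ∃ z : Pt d, ∃ q ∈ S.proto, t = q.translate z := by
    intro t ht
    rcases S.mem_Omega_proto hT t ht.1 with ⟨q, hq, z, hz⟩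
    exact ⟨z, q, hq, hz⟩
  -- a finite r-net of the closed ball of radius M + C
  rcases totallyBounded_iff.mp (isCompact_closedBall (0 : Pt d) (M + C)).totallyBounded
    r hr with ⟨net, hnetfin, hnet⟩
  -- the puncture map is injective into the net-ball decomposition
  have hchoice : ∀ t : A, ∃ y ∈ net, ∃ z : Pt d, (∃ q ∈ S.proto, (t : Tile d) = q.translate z)
      ∧ z ∈ ball y r := by
    rintro ⟨t, ht⟩
    rcases hrep t ht with ⟨z, q, hq, hz⟩
    have hzball : z ∈ closedBall (0 : Pt d) (M + C) := by
      rcases ht.2 with ⟨w, hwt, hwM⟩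
      have hwz : w ∈ closedBall z C := by
        rw [hz] at hwt
        exact SubstSystem.translate_carrier_subset (hCball q hq) z hwt
      rw [mem_closedBall] at hwz ⊢
      calc dist z 0 ≤ dist z w + dist w 0 := dist_triangle _ _ _
      _ ≤ C + M := by
          rw [dist_comm z w]
          exact add_le_add hwz (le_of_lt (by simpa [dist_eq_norm] using hwM))
      _ = M + C := by ring
    rcases Set.mem_iUnion₂.mp (hnet hzball) with ⟨y, hy, hzy⟩
    exact ⟨y, hy, z, ⟨q, hq, hz⟩, hzy⟩
  choose f hf z hz using hchoice
  have : Finite net := hnetfin.to_subtype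
  have hfin : Finite A := by
    have hinj : Function.Injective (fun t : A => (⟨f t, hf t⟩ : net)) := by
      rintro t t' heq
      simp only [Subtype.mk_eq_mk] at heq
      by_contra hne
      have hne' : (t : Tile d) ≠ (t' : Tile d) := fun h => hne (Subtype.ext h)
      rcases hz t with ⟨⟨q, hq, e⟩, hb⟩
      rcases hz t' with ⟨⟨q', hq', e'⟩, hb'⟩
      have hsep := S.disjoint_puncture_balls hT.1.1 t.2.1 t'.2.1 hne' hq hq' e e' hr hrball
      have : dist (z t) (z t') < 2 * r := by
        calc dist (z t) (z t') ≤ dist (z t) (f t) + dist (f t) (z t') := dist_triangle _ _ _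
        _ < r + r := by
            apply add_lt_add
            · exact mem_ball.mp hb
            · rw [dist_comm, heq]; exact mem_ball.mp hb'
        _ = 2 * r := by ring
      exact absurd hsep (not_le.mpr this)
    exact Finite.of_injective _ hinj
  exact Set.finite_coe_iff.mp hfin

end SubstSystem

end Lemmas4

section Lemmas5

variable {d : ℕ}

theorem add_right_injective' (x : Pt d) : Function.Injective (fun y : Pt d => y + x) :=
  fun a b h => by simpa using congrArg (fun w => w - x) h

theorem IsPartialTiling.translate {T : Set (Tile d)} (h : IsPartialTiling T) (x : Pt d) :
    IsPartialTiling (translateSet T x) := by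
  constructor
  · rintro t ⟨s, hs, rfl⟩
    exact (h.1 s hs).translate x
  · rintro t ⟨s, hs, rfl⟩ t' ⟨s', hs', rfl⟩ hne
    have hss' : s ≠ s' := fun hcon => hne (by rw [hcon])
    have hd := h.2 s hs s' hs' hss'
    rw [Tile.translate_carrier, Tile.translate_carrier, interior_translate,
      interior_translate, ← Set.image_inter (add_right_injective' x), hd, Set.image_empty]

theorem IsPatch.translate {P : Set (Tile d)} (h : IsPatch P) (x : Pt d) :
    IsPatch (translateSet P x) :=
  ⟨h.1.translate x, h.2.image _⟩

namespace SubstSystem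

variable (S : SubstSystem d)

theorem Omega_translate {T : Set (Tile d)} (hT : T ∈ S.Omega) (x : Pt d) :
    translateSet T x ∈ S.Omega := by
  constructor
  · constructor
    · exact hT.1.1.translate x
    · rw [psupp_translateSet, hT.1.2, image_add_univ]
  · intro P hP hPpatch
    have hP' : translateSet P (-x) ⊆ T := by
      rintro t ⟨s, hs, rfl⟩
      rcases hP hs with ⟨w, hw, rfl⟩
      show (w.translate x).translate (-x) ∈ T
      rw [Tile.translate_translate]
      simpa using hw
    rcases hT.2 (translateSet P (-x)) hP' (hPpatch.translate (-x)) with ⟨n, p, hp, y, hsub⟩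
    refine ⟨n, p, hp, y + x, ?_⟩
    intro t ht
    have : t.translate (-x) ∈ translateSet P (-x) := ⟨t, ht, rfl⟩
    rcases hsub this with ⟨s, hs, hst⟩
    refine ⟨s, hs, ?_⟩
    have := congrArg (fun u => u.translate x) hst
    simpa [Tile.translate_translate, add_assoc] using this

/-- Main geometric lemma: any two tilings of the punctured hull agree exactly on a large
ball after a suitable translation of the second one. -/
theorem agree_on_ball (hA1 : S.Primitive) (hA3 : S.SubBijective)
    {T₀ T : Set (Tile d)} (hT₀ : T₀ ∈ S.OmegaPunc) (hT : T ∈ S.OmegaPunc)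
    {ρ : ℝ} (hρ : 0 < ρ) :
    ∃ x : Pt d, translateSet T x ∈ S.OmegaPunc ∧
      tilesAt T₀ (ball (0 : Pt d) ρ) = tilesAt (translateSet T x) (ball (0 : Pt d) ρ) := by
  rcases S.exists_inner_radius with ⟨r, hr, hrball⟩
  rcases S.exists_outer_radius with ⟨C, hC, hCball⟩
  set R : ℝ := ρ + 2 * C + 1 with hR
  have hρR : ρ < R := by simp [hR]; linarith
  set P := tilesAt T₀ (ball (0 : Pt d) R) with hPdef
  have hPsub : P ⊆ T₀ := fun t ht => ht.1
  have hPpatch : IsPatch P := by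
    refine ⟨⟨fun t ht => hT₀.1.1.1.1 t (hPsub ht), ?_⟩, S.finite_tilesAt hT₀.1 R⟩
    intro t ht t' ht' hne
    exact hT₀.1.1.1.2 t (hPsub ht) t' (hPsub ht') hne
  rcases hT₀.1.2 P hPsub hPpatch with ⟨n, p₁, hp₁, y, hPy⟩
  rcases S.supertile_in_tiling hA1 hA3 hT.1 hp₁ n with ⟨u, hu⟩
  have hR0 : 0 < R := by rw [hR]; linarith
  have hT' : translateSet T (y - u) ∈ S.Omega := S.Omega_translate hT.1 (y - u)
  have hPT' : P ⊆ translateSet T (y - u) := by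
    intro t ht
    rcases hPy ht with ⟨s, hs, rfl⟩
    have h1 : s.translate u ∈ T := hu ⟨s, hs, rfl⟩
    refine ⟨s.translate u, h1, ?_⟩
    show (s.translate u).translate (y - u) = s.translate y
    rw [Tile.translate_translate]
    congr 1
    abel
  have hTpunc : translateSet T (y - u) ∈ S.OmegaPunc := by
    rcases hT₀.2 with ⟨t0, ht0, p0, hp00, ht0e⟩
    have ht0P : t0 ∈ P := by
      refine ⟨ht0, ⟨0, ?_, mem_ball_self hR0⟩⟩
      rw [ht0e, Tile.translate_zero]
      exact interior_subset (S.proto_zero_mem p0 hp00)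
    exact ⟨hT', t0, hPT' ht0P, p0, hp00, ht0e⟩
  refine ⟨y - u, hTpunc, ?_⟩
  ext t
  constructor
  · rintro ⟨htT₀, hmeet⟩
    have htP : t ∈ P :=
      ⟨htT₀, hmeet.mono (Set.inter_subset_inter_right _ (ball_subset_ball hρR.le))⟩
    exact ⟨hPT' htP, hmeet⟩
  · rintro ⟨htT', hmeet⟩
    suffices htP : t ∈ P by exact ⟨hPsub htP, hmeet⟩
    rcases S.mem_Omega_proto hT' t htT' with ⟨q, hq, z, rfl⟩
    rcases hmeet with ⟨w, hwt, hwρ⟩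
    have hwz : dist w z ≤ C :=
      mem_closedBall.mp (SubstSystem.translate_carrier_subset (hCball q hq) z hwt)
    have hz0 : dist z (0 : Pt d) < ρ + C := by
      calc dist z (0 : Pt d) ≤ dist z w + dist w 0 := dist_triangle _ _ _
      _ < C + ρ := by
          rw [dist_comm z w]
          exact add_lt_add_of_le_of_lt hwz (by simpa [mem_ball] using hwρ)
      _ = ρ + C := by ring
    have hsubball : (q.translate z).carrier ⊆ ball (0 : Pt d) R := by
      intro v hv
      have hvz : dist v z ≤ C :=
        mem_closedBall.mp (SubstSystem.translate_carrier_subset (hCball q hq) z hv)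
      rw [mem_ball]
      calc dist v (0 : Pt d) ≤ dist v z + dist z 0 := dist_triangle _ _ _
      _ < C + (ρ + C) := add_lt_add_of_le_of_lt hvz hz0
      _ < R := by rw [hR]; linarith
    by_cases hmemint : ∃ s ∈ P,
        (interior (q.translate z).carrier ∩ interior s.carrier).Nonempty
    · rcases hmemint with ⟨s, hsP, v, hv1, hv2⟩
      have heq : q.translate z = s := by
        by_contra hne
        have hdisj := hT'.1.1.2 _ htT' s (hPT' hsP) hne
        rw [Set.eq_empty_iff_forall_notMem] at hdisj
        exact hdisj v ⟨hv1, hv2⟩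
      rw [heq]
      exact hsP
    · exfalso
      set F := (fun s : Tile d => frontier s.carrier) '' P with hF
      have hFfin : F.Finite := hPpatch.2.image _
      have hFprop : ∀ Cs ∈ F, IsClosed Cs ∧ interior Cs = ∅ := by
        rintro _ ⟨s, hsP, rfl⟩
        have hcl : IsClosed s.carrier := (hT₀.1.1.1.1 s (hPsub hsP)).isClosed
        exact ⟨isClosed_frontier, interior_frontier_empty hcl⟩
      have hU : interior (q.translate z).carrier ⊆ ⋃₀ F := by
        intro v hv
        have hvball : v ∈ ball (0 : Pt d) R := hsubball (interior_subset hv)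
        have hvsupp : v ∈ psupp T₀ := by rw [hT₀.1.1.2]; trivial
        rcases Set.mem_iUnion₂.mp hvsupp with ⟨s, hsT₀, hvs⟩
        have hsP : s ∈ P := ⟨hsT₀, ⟨v, hvs, hvball⟩⟩
        have hvnotint : v ∉ interior s.carrier := fun hcon =>
          hmemint ⟨s, hsP, ⟨v, hv, hcon⟩⟩
        have hcl : IsClosed s.carrier := (hT₀.1.1.1.1 s (hPsub hsP)).isClosed
        refine ⟨frontier s.carrier, ⟨s, hsP, rfl⟩, ?_⟩
        rw [hcl.frontier_eq]
        exact ⟨hvs, hvnotint⟩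
      have hempty := open_not_subset_finite_union_nowhere_dense F hFfin hFprop _
        isOpen_interior hU
      have hzmem : z ∈ interior (q.translate z).carrier :=
        SubstSystem.ball_subset_interior_translate (hrball q hq) z (mem_ball_self hr)
      rw [hempty] at hzmem
      exact hzmem

end SubstSystem

end Lemmas5

section Lemmas6

variable {d : ℕ}

theorem tilingDist_lt_of_agree {T₀ T' : Set (Tile d)} {ε : ℝ} (hε : 0 < ε)
    (h : tilesAt T₀ (ball (0 : Pt d) (1 / (min ε 1 / 2))) =
         tilesAt T' (ball (0 : Pt d) (1 / (min ε 1 / 2)))) :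
    tilingDist T₀ T' < ε := by
  have hδ : 0 < min ε 1 / 2 := by
    have : 0 < min ε 1 := lt_min hε one_pos
    linarith
  have hle : tilingDist T₀ T' ≤ min ε 1 / 2 := by
    apply csInf_le
    · refine ⟨0, ?_⟩
      rintro a (ha | ha)
      · rw [Set.mem_singleton_iff] at ha
        rw [ha]; norm_num
      · exact le_of_lt ha.1
    · right
      refine ⟨hδ, 0, 0, by simpa using hδ, by simpa using hδ, ?_⟩
      rw [neg_zero, translateSet_zero, translateSet_zero]
      exact h
  have : min ε 1 / 2 < ε := by
    have h1 : min ε 1 ≤ ε := min_le_left _ _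
    linarith
  linarith

end Lemmas6

namespace SymmAction

variable {d : ℕ} {S : SubstSystem d} {G : Subgroup (Pt d ≃ₗᵢ[ℝ] Pt d)} (σ : SymmAction S G)

theorem act_inv_act (g : G) (t : Tile d) : σ.act g⁻¹ (σ.act g t) = t := by
  rw [← σ.act_mul, inv_mul_cancel, σ.act_one]

theorem act_act_inv (g : G) (t : Tile d) : σ.act g (σ.act g⁻¹ t) = t := by
  rw [← σ.act_mul, mul_inv_cancel, σ.act_one]

theorem actSet_translateSet (g : G) (A : Set (Tile d)) (x : Pt d) :
    σ.actSet g (translateSet A x) =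
      translateSet (σ.actSet g A) ((g : Pt d ≃ₗᵢ[ℝ] Pt d) x) := by
  ext t
  simp only [actSet, translateSet, Set.mem_image]
  constructor
  · rintro ⟨_, ⟨s, hs, rfl⟩, rfl⟩
    exact ⟨σ.act g s, ⟨s, hs, rfl⟩, (σ.act_translate g s x).symm⟩
  · rintro ⟨_, ⟨s, hs, rfl⟩, rfl⟩
    exact ⟨s.translate x, ⟨s, hs, rfl⟩, σ.act_translate g s x⟩

theorem act_isTile (g : G) {t : Tile d} (h : t.IsTile) : (σ.act g t).IsTile := by
  rcases h with ⟨e⟩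
  have hc : (σ.act g t).carrier =
      ((g : Pt d ≃ₗᵢ[ℝ] Pt d).toHomeomorph) '' t.carrier := by
    rw [σ.act_carrier]; rfl
  exact ⟨((Homeomorph.setCongr hc).trans
    (((g : Pt d ≃ₗᵢ[ℝ] Pt d).toHomeomorph).image t.carrier).symm).trans e⟩

theorem act_interior (g : G) (s : Set (Pt d)) :
    interior ((g : Pt d ≃ₗᵢ[ℝ] Pt d) '' s) = (g : Pt d ≃ₗᵢ[ℝ] Pt d) '' interior s := by
  have := ((g : Pt d ≃ₗᵢ[ℝ] Pt d).toHomeomorph).image_interior s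
  exact this.symm

theorem psupp_actSet (g : G) (T : Set (Tile d)) :
    psupp (σ.actSet g T) = (g : Pt d ≃ₗᵢ[ℝ] Pt d) '' psupp T := by
  unfold psupp actSet
  rw [Set.biUnion_image]
  simp only [σ.act_carrier]
  rw [← Set.image_iUnion₂]

theorem act_sub' (g : G) {q : Tile d} (hq : q ∈ S.proto) (z : Pt d) :
    S.sub (σ.act g (q.translate z)) = σ.act g '' S.sub (q.translate z) := by
  rw [σ.act_translate, S.sub_translate, S.sub_translate, σ.act_sub g q hq,
    ← Set.image_comp, ← Set.image_comp]
  apply Set.image_congr'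
  intro s
  show (σ.act g s).translate (S.lam • (g : Pt d ≃ₗᵢ[ℝ] Pt d) z) =
    σ.act g (s.translate (S.lam • z))
  rw [σ.act_translate, map_smul]

theorem actSet_subSet (g : G) {P : Set (Tile d)}
    (hP : ∀ t ∈ P, ∃ q ∈ S.proto, ∃ z : Pt d, t = q.translate z) :
    S.subSet (σ.actSet g P) = σ.actSet g (S.subSet P) := by
  have hcong : ∀ t ∈ P, S.sub (σ.act g t) = σ.act g '' S.sub t := by
    intro t ht
    rcases hP t ht with ⟨q, hq, z, rfl⟩
    exact σ.act_sub' g hq z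
  unfold SubstSystem.subSet actSet
  rw [Set.biUnion_image, Set.iUnion₂_congr hcong, ← Set.image_iUnion₂]

theorem actSet_omegan (g : G) {p : Tile d} (hp : p ∈ S.proto) (n : ℕ) :
    σ.actSet g (S.omegan n p) = S.omegan n (σ.act g p) := by
  induction n with
  | zero =>
    show σ.act g '' {p} = _
    rw [Set.image_singleton]
    rfl
  | succ n ih =>
    calc σ.actSet g (S.omegan (n + 1) p) = σ.actSet g (S.subSet (S.omegan n p)) := by
          rw [SubstSystem.omegan, S.subIter_succ']; rfl
    _ = S.subSet (σ.actSet g (S.omegan n p)) :=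
        (σ.actSet_subSet g (S.omegan_proto hp n)).symm
    _ = S.subSet (S.omegan n (σ.act g p)) := by rw [ih]
    _ = S.omegan (n + 1) (σ.act g p) := by
          show S.subSet (S.subIter n {σ.act g p}) = S.subIter (n + 1) {σ.act g p}
          rw [S.subIter_succ']

theorem actSet_Omega (g : G) {T : Set (Tile d)} (hT : T ∈ S.Omega) :
    σ.actSet g T ∈ S.Omega := by
  constructor
  · constructor
    · constructor
      · rintro t ⟨s, hs, rfl⟩
        exact σ.act_isTile g (hT.1.1.1 s hs)
      · rintro t ⟨s, hs, rfl⟩ t' ⟨s', hs', rfl⟩ hne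
        have hss' : s ≠ s' := fun hcon => hne (by rw [hcon])
        have hd := hT.1.1.2 s hs s' hs' hss'
        rw [σ.act_carrier, σ.act_carrier, act_interior g, act_interior g,
          ← Set.image_inter (g : Pt d ≃ₗᵢ[ℝ] Pt d).injective, hd, Set.image_empty]
    · rw [σ.psupp_actSet, hT.1.2, Set.image_univ,
        (g : Pt d ≃ₗᵢ[ℝ] Pt d).surjective.range_eq]
  · intro P hP hPpatch
    have hP' : σ.actSet g⁻¹ P ⊆ T := by
      rintro t ⟨s, hs, rfl⟩
      rcases hP hs with ⟨w, hw, rfl⟩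
      rw [σ.act_inv_act]
      exact hw
    have hpatch' : IsPatch (σ.actSet g⁻¹ P) := by
      refine ⟨⟨?_, ?_⟩, hPpatch.2.image _⟩
      · rintro t ⟨s, hs, rfl⟩
        exact σ.act_isTile g⁻¹ (hPpatch.1.1 s hs)
      · rintro t ⟨s, hs, rfl⟩ t' ⟨s', hs', rfl⟩ hne
        have hss' : s ≠ s' := fun hcon => hne (by rw [hcon])
        have hd := hPpatch.1.2 s hs s' hs' hss'
        rw [σ.act_carrier, σ.act_carrier, act_interior g⁻¹, act_interior g⁻¹,
          ← Set.image_inter ((g⁻¹ : G) : Pt d ≃ₗᵢ[ℝ] Pt d).injective, hd, Set.image_empty]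
    rcases hT.2 _ hP' hpatch' with ⟨n, p, hp, x, hsub⟩
    refine ⟨n, σ.act g p, σ.act_proto g p hp, (g : Pt d ≃ₗᵢ[ℝ] Pt d) x, ?_⟩
    intro t ht
    have h2 : σ.act g⁻¹ t ∈ translateSet (S.omegan n p) x := hsub ⟨t, ht, rfl⟩
    rcases h2 with ⟨s, hs, hst⟩
    have hmem : σ.act g s ∈ S.omegan n (σ.act g p) := by
      rw [← σ.actSet_omegan g hp n]
      exact ⟨s, hs, rfl⟩
    refine ⟨σ.act g s, hmem, ?_⟩
    have h3 := congrArg (σ.act g) hst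
    rw [σ.act_translate, σ.act_act_inv] at h3
    exact h3

theorem actSet_OmegaPunc (g : G) {T : Set (Tile d)} (hT : T ∈ S.OmegaPunc) :
    σ.actSet g T ∈ S.OmegaPunc := by
  rcases hT.2 with ⟨t, htT, p, hp, hte⟩
  refine ⟨σ.actSet_Omega g hT.1, σ.act g t, ⟨t, htT, rfl⟩,
    σ.act g p, σ.act_proto g p hp, ?_⟩
  rw [hte, σ.act_translate, map_zero]

theorem actSet_one (T : Set (Tile d)) : σ.actSet 1 T = T := by
  unfold actSet
  have : σ.act 1 = id := funext fun t => σ.act_one t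
  rw [this, Set.image_id]

theorem actSet_act_inv (g : G) (T : Set (Tile d)) : σ.actSet g (σ.actSet g⁻¹ T) = T := by
  unfold actSet
  rw [← Set.image_comp]
  have : σ.act g ∘ σ.act g⁻¹ = id := funext fun t => σ.act_act_inv g t
  rw [this, Set.image_id]

end SymmAction

/-- For a finite symmetry group `G` acting freely on `𝒫`, the only
open invariant subsets of `Ω_punc` for `R_punc ⋊ G` are `∅` and `Ω_punc`;
equivalently, every `R_punc ⋊ G`-orbit is dense in `Ω_punc`. -/
theorem stmt2 {d : ℕ} (hd : 1 ≤ d) (S : SubstSystem d)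
    (hA1 : S.Primitive) (hA2 : S.FLC) (hA3 : S.SubBijective)
    (G : Subgroup (Pt d ≃ₗᵢ[ℝ] Pt d)) [Finite G] (σ : SymmAction S G)
    (hfree : σ.FreeOnProto) :
    (∀ E : Set (Set (Tile d)), E ⊆ S.OmegaPunc → S.OpenInPunc E →
      (∀ T ∈ E, ∀ T' : Set (Tile d), (T, T') ∈ S.Rpunc →
        ∀ g : G, σ.actSet g⁻¹ T' ∈ E) →
      E = ∅ ∨ E = S.OmegaPunc) ∧
    (∀ T ∈ S.OmegaPunc,
      S.DenseInPunc {T'' | ∃ (g : G) (x : Pt d),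
        translateSet T x ∈ S.OmegaPunc ∧ T'' = σ.actSet g⁻¹ (translateSet T x)}) := by
  have dense2 : ∀ T ∈ S.OmegaPunc,
      S.DenseInPunc {T'' | ∃ (g : G) (x : Pt d),
        translateSet T x ∈ S.OmegaPunc ∧ T'' = σ.actSet g⁻¹ (translateSet T x)} := by
    intro T hT T₀ hT₀ ε hε
    have hmin : 0 < min ε 1 / 2 := by
      have := lt_min hε one_pos
      linarith
    have hρ : 0 < 1 / (min ε 1 / 2) := by positivity
    rcases S.agree_on_ball hA1 hA3 hT₀ hT hρ with ⟨x, hTx, hagree⟩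
    refine ⟨translateSet T x, ⟨1, x, hTx, by rw [inv_one, σ.actSet_one]⟩, ?_⟩
    exact tilingDist_lt_of_agree hε hagree
  refine ⟨?_, dense2⟩
  intro E hEsub hEopen hEinv
  by_cases hE : E = ∅
  · exact Or.inl hE
  · right
    rcases Set.nonempty_iff_ne_empty.mpr hE with ⟨Tm, hTm⟩
    apply Set.Subset.antisymm hEsub
    intro T₀ hT₀
    rcases hEopen.2 Tm hTm with ⟨ε, hε, hball⟩
    rcases dense2 T₀ hT₀ Tm (hEsub hTm) ε hε with ⟨T', hT'orb, hdist⟩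
    rcases hT'orb with ⟨g, x, hTx, rfl⟩
    have hT'punc : σ.actSet g⁻¹ (translateSet T₀ x) ∈ S.OmegaPunc :=
      σ.actSet_OmegaPunc g⁻¹ hTx
    have hT'E : σ.actSet g⁻¹ (translateSet T₀ x) ∈ E := hball _ hT'punc hdist
    have hApunc : σ.actSet g⁻¹ T₀ ∈ S.OmegaPunc := σ.actSet_OmegaPunc g⁻¹ hT₀
    have hrel : (σ.actSet g⁻¹ (translateSet T₀ x), σ.actSet g⁻¹ T₀) ∈ S.Rpunc := by
      refine ⟨hT'punc, hApunc, -(((g⁻¹ : G) : Pt d ≃ₗᵢ[ℝ] Pt d) x), ?_⟩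
      rw [σ.actSet_translateSet, translateSet_translateSet, add_neg_cancel, translateSet_zero]
    have hfin := hEinv _ hT'E (σ.actSet g⁻¹ T₀) hrel g⁻¹
    rw [inv_inv, σ.actSet_act_inv] at hfin
    exact hfin
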